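/- Let 0 < q₁ < p₁ ≤ 1, 0 < q₂ < p₂ ≤ 1 and let n, m ≥ 1 be natural numbers. Then for all (x,y) ∈ [0,1]², the second central moments of the bivariate (p,q)-Bernstein operator are B_{n,m}((s,t) ↦ (s-x)²; x,y) = (p₁^{n-1}/[n]_{p₁,q₁})(x - x²) and B_{n,m}((s,t) ↦ (t-y)²; x,y) = (p₂^{m-1}/[m]_{p₂,q₂})(y - y²). -/

import Mathlib

open Finset Set Filter Topology

/-- The (p,q)-integer `[n]_{p,q} = ∑_{i=0}^{n-1} p^(n-1-i) q^i`. -/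
noncomputable def pqInt (p q : ℝ) (n : ℕ) : ℝ :=
  ∑ i ∈ Finset.range n, p ^ (n - 1 - i) * q ^ i

/-- The (p,q)-factorial `[n]_{p,q}! = ∏_{j=1}^n [j]_{p,q}`. -/
noncomputable def pqFactorial (p q : ℝ) (n : ℕ) : ℝ :=
  ∏ j ∈ Finset.range n, pqInt p q (j + 1)

/-- The (p,q)-binomial coefficient. -/
noncomputable def pqChoose (p q : ℝ) (n k : ℕ) : ℝ :=
  pqFactorial p q n / (pqFactorial p q k * pqFactorial p q (n - k))

/-- The node `p^(n-k) [k]_{p,q} / [n]_{p,q}` of the (p,q)-Bernstein operator. -/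
noncomputable def pqNode (p q : ℝ) (n k : ℕ) : ℝ :=
  p ^ (n - k) * pqInt p q k / pqInt p q n

/-- The basis function
`p^((k(k-1)-n(n-1))/2) C(n,k)_{p,q} x^k ∏_{s=0}^{n-k-1} (p^s - q^s x)`,
where `p^((k(k-1)-n(n-1))/2)` is written as `p^(k(k-1)/2) / p^(n(n-1)/2)`. -/
noncomputable def pqBasis (p q : ℝ) (n k : ℕ) (x : ℝ) : ℝ :=
  (p ^ (k.choose 2) / p ^ (n.choose 2)) * pqChoose p q n k * x ^ k *
    ∏ s ∈ Finset.range (n - k), (p ^ s - q ^ s * x)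

/-- The (p,q)-Bernstein operator `B_{n,p,q}(f;x)`. -/
noncomputable def pqBernstein (p q : ℝ) (n : ℕ) (f : ℝ → ℝ) (x : ℝ) : ℝ :=
  ∑ k ∈ Finset.range (n + 1), pqBasis p q n k x * f (pqNode p q n k)

/-- The bivariate (p,q)-Bernstein operator
`B_{n,m}^{(p₁,q₁),(p₂,q₂)}(f;x,y)`. -/
noncomputable def pqBernstein2 (p₁ q₁ p₂ q₂ : ℝ) (n m : ℕ)
    (f : ℝ → ℝ → ℝ) (x y : ℝ) : ℝ :=
  ∑ k ∈ Finset.range (n + 1), ∑ j ∈ Finset.range (m + 1),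
    pqBasis p₁ q₁ n k x * pqBasis p₂ q₂ m j y *
      f (pqNode p₁ q₁ n k) (pqNode p₂ q₂ m j)

section aux
variable {p q : ℝ}

lemma pqInt_zero : pqInt p q 0 = 0 := by simp [pqInt]

lemma pqInt_succ_right (n : ℕ) : pqInt p q (n + 1) = p * pqInt p q n + q ^ n := by
  unfold pqInt
  rw [Finset.sum_range_succ, Finset.mul_sum]
  simp only [Nat.add_sub_cancel]
  congr 1
  · refine Finset.sum_congr rfl fun i hi => ?_
    rw [Finset.mem_range] at hi
    rw [show n - i = (n - 1 - i) + 1 by omega, pow_succ]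
    ring
  · simp

lemma pqInt_succ_left (n : ℕ) : pqInt p q (n + 1) = p ^ n + q * pqInt p q n := by
  unfold pqInt
  rw [Finset.sum_range_succ', Finset.mul_sum]
  simp only [Nat.add_sub_cancel]
  rw [add_comm]
  congr 1
  · simp
  · refine Finset.sum_congr rfl fun i hi => ?_
    rw [Finset.mem_range] at hi
    rw [show n - (i + 1) = n - 1 - i by omega, pow_succ]
    ring

lemma pqInt_add (k d : ℕ) :
    pqInt p q (k + d) = p ^ d * pqInt p q k + q ^ k * pqInt p q d := by
  induction d with
  | zero => simp [pqInt_zero]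
  | succ d ih =>
    rw [show k + (d + 1) = (k + d) + 1 by ring, pqInt_succ_right, ih,
      pqInt_succ_right, pow_add, pow_succ]
    ring

lemma pqInt_pos (hp : 0 < p) (hq : 0 < q) {n : ℕ} (hn : 0 < n) :
    0 < pqInt p q n := by
  unfold pqInt
  apply Finset.sum_pos
  · intro i _; positivity
  · simpa using hn.ne'

lemma pqFactorial_succ (n : ℕ) :
    pqFactorial p q (n + 1) = pqFactorial p q n * pqInt p q (n + 1) :=
  Finset.prod_range_succ _ _

lemma pqFactorial_pos (hp : 0 < p) (hq : 0 < q) (n : ℕ) :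
    0 < pqFactorial p q n := by
  unfold pqFactorial
  exact Finset.prod_pos fun j _ => pqInt_pos hp hq (Nat.succ_pos j)

lemma pqChoose_succ_succ_mul (hp : 0 < p) (hq : 0 < q) {n k : ℕ} (hk : k ≤ n) :
    pqChoose p q (n + 1) (k + 1) * pqInt p q (k + 1) =
      pqInt p q (n + 1) * pqChoose p q n k := by
  unfold pqChoose
  rw [show n + 1 - (k + 1) = n - k by omega, pqFactorial_succ n, pqFactorial_succ k]
  have h1 := (pqFactorial_pos hp hq k).ne'
  have h2 := (pqFactorial_pos hp hq (n - k)).ne'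
  have h3 := (pqInt_pos hp hq (Nat.succ_pos k)).ne'
  field_simp

lemma pqChoose_pascal (hp : 0 < p) (hq : 0 < q) {n k : ℕ} (hk : k + 1 ≤ n) :
    pqChoose p q (n + 1) (k + 1) =
      p ^ (k + 1) * pqChoose p q n (k + 1) + q ^ (n - k) * pqChoose p q n k := by
  obtain ⟨d, rfl⟩ : ∃ d, n = k + 1 + d := ⟨n - (k + 1), by omega⟩
  have hsplit : pqInt p q (k + 1 + d + 1) =
      p ^ (k + 1) * pqInt p q (d + 1) + q ^ (d + 1) * pqInt p q (k + 1) := by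
    rw [show k + 1 + d + 1 = (d + 1) + (k + 1) by ring, pqInt_add]
  unfold pqChoose
  rw [show k + 1 + d + 1 - (k + 1) = d + 1 by omega,
    show k + 1 + d - (k + 1) = d by omega,
    show k + 1 + d - k = d + 1 by omega,
    pqFactorial_succ (k + 1 + d), hsplit, pqFactorial_succ d, pqFactorial_succ k]
  have h1 := (pqFactorial_pos hp hq k).ne'
  have h2 := (pqFactorial_pos hp hq d).ne'
  have h3 := (pqInt_pos hp hq (Nat.succ_pos k)).ne'
  have h4 := (pqInt_pos hp hq (Nat.succ_pos d)).ne'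
  field_simp

end aux
section basis
variable {p q : ℝ}

lemma pqChoose_zero (hp : 0 < p) (hq : 0 < q) (n : ℕ) : pqChoose p q n 0 = 1 := by
  unfold pqChoose
  have h1 := (pqFactorial_pos hp hq n).ne'
  rw [Nat.sub_zero, show pqFactorial p q 0 = 1 from Finset.prod_range_zero _,
    one_mul, div_self h1]

lemma pqChoose_self (hp : 0 < p) (hq : 0 < q) (n : ℕ) : pqChoose p q n n = 1 := by
  unfold pqChoose
  have h1 := (pqFactorial_pos hp hq n).ne'
  rw [Nat.sub_self, show pqFactorial p q 0 = 1 from Finset.prod_range_zero _,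
    mul_one, div_self h1]

lemma choose_two_succ (n : ℕ) : (n + 1).choose 2 = n.choose 2 + n := by
  rw [Nat.choose_succ_succ]
  simp [Nat.choose_one_right, Nat.add_comm]

lemma pqBasis_rec_zero (hp : 0 < p) (hq : 0 < q) (n : ℕ) (x : ℝ) :
    pqBasis p q (n + 1) 0 x = (1 - (q / p) ^ n * x) * pqBasis p q n 0 x := by
  unfold pqBasis
  rw [pqChoose_zero hp hq, pqChoose_zero hp hq, choose_two_succ,
    Nat.sub_zero, Nat.sub_zero, Finset.prod_range_succ, pow_add]
  have hp' := hp.ne'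
  simp only [div_pow]
  field_simp
  ring

lemma pqBasis_rec_top (hp : 0 < p) (hq : 0 < q) (n : ℕ) (x : ℝ) :
    pqBasis p q (n + 1) (n + 1) x = x * pqBasis p q n n x := by
  unfold pqBasis
  rw [pqChoose_self hp hq, pqChoose_self hp hq, Nat.sub_self, Nat.sub_self,
    Finset.prod_range_zero, div_self (pow_ne_zero _ hp.ne'),
    div_self (pow_ne_zero _ hp.ne')]
  ring

lemma pqBasis_rec_succ (hp : 0 < p) (hq : 0 < q) {n k : ℕ} (hk : k + 1 ≤ n) (x : ℝ) :
    pqBasis p q (n + 1) (k + 1) x =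
      (1 - (q / p) ^ (n - (k + 1)) * x) * pqBasis p q n (k + 1) x +
        (q / p) ^ (n - k) * x * pqBasis p q n k x := by
  obtain ⟨d, rfl⟩ : ∃ d, n = k + 1 + d := ⟨n - (k + 1), by omega⟩
  unfold pqBasis
  rw [pqChoose_pascal hp hq hk,
    show k + 1 + d - (k + 1) = d by omega,
    show k + 1 + d - k = d + 1 by omega,
    show k + 1 + d + 1 - (k + 1) = d + 1 by omega,
    choose_two_succ (k + 1 + d), choose_two_succ k,
    Finset.prod_range_succ]
  have hp' := hp.ne'
  simp only [div_pow]
  field_simp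
  ring

end basis
section sums
variable {p q : ℝ}

lemma pqBasis_zero_zero (hp : 0 < p) (hq : 0 < q) (x : ℝ) :
    pqBasis p q 0 0 x = 1 := by
  unfold pqBasis
  rw [pqChoose_zero hp hq]
  simp

lemma sum_pqBasis (hp : 0 < p) (hq : 0 < q) (n : ℕ) (x : ℝ) :
    ∑ k ∈ Finset.range (n + 1), pqBasis p q n k x = 1 := by
  induction n with
  | zero => simpa using pqBasis_zero_zero hp hq x
  | succ n ih =>
    set f : ℕ → ℝ := fun k => pqBasis p q n k x with hf
    set g : ℕ → ℝ := fun k => (q / p) ^ (n - k) * x * pqBasis p q n k x with hg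
    have hstep : ∀ k ∈ Finset.range n,
        pqBasis p q (n + 1) (k + 1) x = (f (k + 1) - g (k + 1)) + g k := by
      intro k hk
      rw [Finset.mem_range] at hk
      rw [pqBasis_rec_succ hp hq (by omega) x]
      simp only [hf, hg]
      ring
    rw [Finset.sum_range_succ', Finset.sum_range_succ, Finset.sum_congr rfl hstep,
      Finset.sum_add_distrib]
    have h1 : ∑ k ∈ Finset.range n, (f (k + 1) - g (k + 1)) =
        (∑ k ∈ Finset.range (n + 1), (f k - g k)) - (f 0 - g 0) := by
      rw [Finset.sum_range_succ' (fun k => f k - g k)]; ring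
    have h2 : ∑ k ∈ Finset.range n, g k =
        (∑ k ∈ Finset.range (n + 1), g k) - g n := by
      rw [Finset.sum_range_succ]; ring
    have h3 : ∑ k ∈ Finset.range (n + 1), (f k - g k) =
        1 - ∑ k ∈ Finset.range (n + 1), g k := by
      rw [Finset.sum_sub_distrib, ih]
    have h4 : pqBasis p q (n + 1) (n + 1) x = g n := by
      rw [pqBasis_rec_top hp hq, hg]; simp [hf]
    have h5 : pqBasis p q (n + 1) 0 x = f 0 - g 0 := by
      rw [pqBasis_rec_zero hp hq, hf, hg]; simp; ring
    rw [h1, h2, h3, h4, h5]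
    ring

end sums
section moments
variable {p q : ℝ}

lemma pqBasis_mul_node (hp : 0 < p) (hq : 0 < q) {m k : ℕ} (hk : k ≤ m) (x : ℝ) :
    pqBasis p q (m + 1) (k + 1) x * pqNode p q (m + 1) (k + 1) =
      x * pqBasis p q m k x := by
  unfold pqBasis pqNode
  rw [show m + 1 - (k + 1) = m - k by omega]
  have hmul := pqChoose_succ_succ_mul hp hq hk (p := p) (q := q)
  have hI := (pqInt_pos hp hq (Nat.succ_pos m)).ne'
  have hp' := hp.ne'
  have hI1 := (pqInt_pos hp hq (Nat.succ_pos k)).ne'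
  have hrep : pqChoose p q (m + 1) (k + 1) =
      pqInt p q (m + 1) * pqChoose p q m k / pqInt p q (k + 1) := by
    rw [eq_div_iff hI1]; exact hmul
  obtain ⟨d, rfl⟩ : ∃ d, m = k + d := ⟨m - k, by omega⟩
  rw [show k + d - k = d by omega, choose_two_succ (k + d), choose_two_succ k, hrep]
  field_simp
  ring


lemma sum_pqBasis_mul_node (hp : 0 < p) (hq : 0 < q) (m : ℕ) (x : ℝ) :
    ∑ k ∈ Finset.range (m + 2), pqBasis p q (m + 1) k x * pqNode p q (m + 1) k
      = x := by
  rw [Finset.sum_range_succ']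
  have h0 : pqNode p q (m + 1) 0 = 0 := by
    simp [pqNode, pqInt_zero]
  rw [h0, mul_zero, add_zero]
  have : ∀ k ∈ Finset.range (m + 1),
      pqBasis p q (m + 1) (k + 1) x * pqNode p q (m + 1) (k + 1) =
        x * pqBasis p q m k x := by
    intro k hk
    rw [Finset.mem_range] at hk
    exact pqBasis_mul_node hp hq (by omega) x
  rw [Finset.sum_congr rfl this, ← Finset.mul_sum, sum_pqBasis hp hq, mul_one]

end moments
section moments2
variable {p q : ℝ}

lemma pqInt_mul_node (hp : 0 < p) (hq : 0 < q) {m k : ℕ} (hk : k ≤ m) :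
    pqInt p q m * pqNode p q m k = p ^ (m - k) * pqInt p q k := by
  rcases Nat.eq_zero_or_pos m with h | h
  · subst h
    interval_cases k
    simp [pqNode, pqInt_zero]
  · unfold pqNode
    rw [mul_div_cancel₀ _ (pqInt_pos hp hq h).ne']

lemma node_succ (hp : 0 < p) (hq : 0 < q) {m k : ℕ} (hk : k ≤ m) :
    pqNode p q (m + 1) (k + 1) =
      (p ^ m + q * (pqInt p q m * pqNode p q m k)) / pqInt p q (m + 1) := by
  rw [pqInt_mul_node hp hq hk]
  unfold pqNode
  rw [show m + 1 - (k + 1) = m - k by omega, pqInt_succ_left]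
  congr 1
  rw [mul_add, ← pow_add, show m - k + k = m by omega]
  ring

lemma sum_S1_aux (hp : 0 < p) (hq : 0 < q) (m : ℕ) (x : ℝ) :
    pqInt p q m *
      (∑ k ∈ Finset.range (m + 1), pqBasis p q m k x * pqNode p q m k) =
      pqInt p q m * x := by
  cases m with
  | zero => simp [pqInt_zero]
  | succ m' => rw [sum_pqBasis_mul_node hp hq]

lemma sum_pqBasis_mul_node_sq (hp : 0 < p) (hq : 0 < q) (m : ℕ) (x : ℝ) :
    ∑ k ∈ Finset.range (m + 2), pqBasis p q (m + 1) k x * pqNode p q (m + 1) k ^ 2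
      = x * (p ^ m + q * (pqInt p q m * x)) / pqInt p q (m + 1) := by
  have hI := (pqInt_pos hp hq (Nat.succ_pos m)).ne'
  rw [Finset.sum_range_succ']
  have h0 : pqNode p q (m + 1) 0 = 0 := by simp [pqNode, pqInt_zero]
  rw [h0]
  norm_num
  rw [eq_div_iff hI, Finset.sum_mul]
  have key : ∀ k ∈ Finset.range (m + 1),
      pqBasis p q (m + 1) (k + 1) x * pqNode p q (m + 1) (k + 1) ^ 2 *
          pqInt p q (m + 1) =
        (x * p ^ m) * pqBasis p q m k x +
          (x * q) * (pqInt p q m * (pqBasis p q m k x * pqNode p q m k)) := by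
    intro k hk
    rw [Finset.mem_range] at hk
    rw [sq, ← mul_assoc, pqBasis_mul_node hp hq (by omega),
      node_succ hp hq (by omega)]
    field_simp
  rw [Finset.sum_congr rfl key, Finset.sum_add_distrib, ← Finset.mul_sum,
    ← Finset.mul_sum, ← Finset.mul_sum, sum_pqBasis hp hq, sum_S1_aux hp hq]
  ring

lemma pqBernstein_central_univ (hp : 0 < p) (hq : 0 < q) (m : ℕ) (x : ℝ) :
    ∑ k ∈ Finset.range (m + 2), pqBasis p q (m + 1) k x *
        (pqNode p q (m + 1) k - x) ^ 2
      = p ^ m / pqInt p q (m + 1) * (x - x ^ 2) := by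
  have e : ∀ k ∈ Finset.range (m + 2),
      pqBasis p q (m + 1) k x * (pqNode p q (m + 1) k - x) ^ 2 =
        pqBasis p q (m + 1) k x * pqNode p q (m + 1) k ^ 2 -
          (2 * x) * (pqBasis p q (m + 1) k x * pqNode p q (m + 1) k) +
          x ^ 2 * pqBasis p q (m + 1) k x := by
    intro k _; ring
  rw [Finset.sum_congr rfl e, Finset.sum_add_distrib, Finset.sum_sub_distrib,
    ← Finset.mul_sum, ← Finset.mul_sum, sum_pqBasis_mul_node_sq hp hq,
    sum_pqBasis_mul_node hp hq, sum_pqBasis hp hq]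
  have hI := (pqInt_pos hp hq (Nat.succ_pos m)).ne'
  rw [pqInt_succ_left] at hI ⊢
  field_simp
  ring

end moments2

theorem pqBernstein2_central_moments (p₁ q₁ p₂ q₂ : ℝ) (n m : ℕ)
    (hq₁ : 0 < q₁) (hq₁p₁ : q₁ < p₁) (hp₁ : p₁ ≤ 1)
    (hq₂ : 0 < q₂) (hq₂p₂ : q₂ < p₂) (hp₂ : p₂ ≤ 1)
    (hn : 1 ≤ n) (hm : 1 ≤ m)
    (x y : ℝ) (hx : x ∈ Set.Icc (0 : ℝ) 1) (hy : y ∈ Set.Icc (0 : ℝ) 1) :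
    pqBernstein2 p₁ q₁ p₂ q₂ n m (fun s _ => (s - x) ^ 2) x y =
      (p₁ ^ (n - 1) / pqInt p₁ q₁ n) * (x - x ^ 2) ∧
    pqBernstein2 p₁ q₁ p₂ q₂ n m (fun _ t => (t - y) ^ 2) x y =
      (p₂ ^ (m - 1) / pqInt p₂ q₂ m) * (y - y ^ 2) := by
  have hp1 : 0 < p₁ := hq₁.trans hq₁p₁
  have hp2 : 0 < p₂ := hq₂.trans hq₂p₂
  obtain ⟨a, rfl⟩ : ∃ a, n = a + 1 := ⟨n - 1, by omega⟩
  obtain ⟨b, rfl⟩ : ∃ b, m = b + 1 := ⟨m - 1, by omega⟩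
  constructor
  · unfold pqBernstein2
    have inner : ∀ k ∈ Finset.range (a + 1 + 1),
        (∑ j ∈ Finset.range (b + 1 + 1),
          pqBasis p₁ q₁ (a + 1) k x * pqBasis p₂ q₂ (b + 1) j y *
            (pqNode p₁ q₁ (a + 1) k - x) ^ 2)
        = pqBasis p₁ q₁ (a + 1) k x * (pqNode p₁ q₁ (a + 1) k - x) ^ 2 := by
      intro k _
      have e : ∀ j ∈ Finset.range (b + 1 + 1),
          pqBasis p₁ q₁ (a + 1) k x * pqBasis p₂ q₂ (b + 1) j y *
            (pqNode p₁ q₁ (a + 1) k - x) ^ 2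
          = (pqBasis p₁ q₁ (a + 1) k x * (pqNode p₁ q₁ (a + 1) k - x) ^ 2) *
              pqBasis p₂ q₂ (b + 1) j y := by
        intro j _; ring
      rw [Finset.sum_congr rfl e, ← Finset.mul_sum,
        show b + 1 + 1 = (b + 1) + 1 from rfl, sum_pqBasis hp2 hq₂, mul_one]
    rw [Finset.sum_congr rfl inner]
    simpa using pqBernstein_central_univ hp1 hq₁ a x
  · unfold pqBernstein2
    have inner : ∀ k ∈ Finset.range (a + 1 + 1),
        (∑ j ∈ Finset.range (b + 1 + 1),
          pqBasis p₁ q₁ (a + 1) k x * pqBasis p₂ q₂ (b + 1) j y *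
            (pqNode p₂ q₂ (b + 1) j - y) ^ 2)
        = pqBasis p₁ q₁ (a + 1) k x *
            (p₂ ^ b / pqInt p₂ q₂ (b + 1) * (y - y ^ 2)) := by
      intro k _
      have e : ∀ j ∈ Finset.range (b + 1 + 1),
          pqBasis p₁ q₁ (a + 1) k x * pqBasis p₂ q₂ (b + 1) j y *
            (pqNode p₂ q₂ (b + 1) j - y) ^ 2
          = pqBasis p₁ q₁ (a + 1) k x *
              (pqBasis p₂ q₂ (b + 1) j y * (pqNode p₂ q₂ (b + 1) j - y) ^ 2) := by
        intro j _; ring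
      rw [Finset.sum_congr rfl e, ← Finset.mul_sum]
      congr 1
      simpa using pqBernstein_central_univ hp2 hq₂ b y
    rw [Finset.sum_congr rfl inner, ← Finset.sum_mul, sum_pqBasis hp1 hq₁, one_mul]
    simp
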